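/- Suppose random variables T, Y₀ ∈ {0,1} satisfy (1/γ)·P(T=1|Y₀=1,D=1,X=x) ≤ P(T=1|Y₀=0,D=1,X=x) ≤ γ·P(T=1|Y₀=1,D=1,X=x) for some γ ≥ 1. Then P(T=1|Y₀=1,D=1,X=x) ≤ P(T=1|D=1,X=x) / (P(Y₀=1|D=1,X=x) + (1/γ)(1 − P(Y₀=1|D=1,X=x))). -/

import Mathlib

open MeasureTheory

/-- Conditional probability `P(A | B) = P(A ∩ B) / P(B)` as a real number. -/
noncomputable def condP {Ω : Type*} [MeasurableSpace Ω] (μ : Measure Ω) (A B : Set Ω) : ℝ :=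
  (μ (A ∩ B)).toReal / (μ B).toReal

/-- Sensitivity-model upper bound: under
`(1/γ)·P(T=1|Y₀=1,D=1,X=x) ≤ P(T=1|Y₀=0,D=1,X=x) ≤ γ·P(T=1|Y₀=1,D=1,X=x)` with `γ ≥ 1`,
`P(T=1|Y₀=1,D=1,X=x) ≤ P(T=1|D=1,X=x)/(P(Y₀=1|D=1,X=x) + (1/γ)(1 − P(Y₀=1|D=1,X=x)))`. -/
theorem sensitivity_upper_bound
    {Ω ι : Type*} [MeasurableSpace Ω]
    (μ : Measure Ω) [IsProbabilityMeasure μ]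
    (T Y0 D : Ω → ℕ) (X : Ω → ι) (x : ι) (γ : ℝ) (hγ : 1 ≤ γ)
    (hTm : Measurable T) (hY0m : Measurable Y0) (hDm : Measurable D)
    (hXx : MeasurableSet {ω | X ω = x})
    (hY0bin : ∀ ω, Y0 ω = 0 ∨ Y0 ω = 1)
    (hpos : 0 < μ ({ω | D ω = 1} ∩ {ω | X ω = x}))
    (hpos1 : 0 < μ ({ω | Y0 ω = 1} ∩ ({ω | D ω = 1} ∩ {ω | X ω = x})))
    (hpos0 : 0 < μ ({ω | Y0 ω = 0} ∩ ({ω | D ω = 1} ∩ {ω | X ω = x})))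
    (hsensL : (1 / γ) *
        condP μ {ω | T ω = 1} ({ω | Y0 ω = 1} ∩ ({ω | D ω = 1} ∩ {ω | X ω = x})) ≤
      condP μ {ω | T ω = 1} ({ω | Y0 ω = 0} ∩ ({ω | D ω = 1} ∩ {ω | X ω = x})))
    (hsensU : condP μ {ω | T ω = 1} ({ω | Y0 ω = 0} ∩ ({ω | D ω = 1} ∩ {ω | X ω = x})) ≤
      γ * condP μ {ω | T ω = 1} ({ω | Y0 ω = 1} ∩ ({ω | D ω = 1} ∩ {ω | X ω = x}))) :
    condP μ {ω | T ω = 1} ({ω | Y0 ω = 1} ∩ ({ω | D ω = 1} ∩ {ω | X ω = x})) ≤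
      condP μ {ω | T ω = 1} ({ω | D ω = 1} ∩ {ω | X ω = x}) /
        (condP μ {ω | Y0 ω = 1} ({ω | D ω = 1} ∩ {ω | X ω = x}) +
          (1 / γ) * (1 - condP μ {ω | Y0 ω = 1} ({ω | D ω = 1} ∩ {ω | X ω = x}))) := by

  classical
  set B : Set Ω := {ω | D ω = 1} ∩ {ω | X ω = x} with hB
  set B1 : Set Ω := {ω | Y0 ω = 1} ∩ B with hB1
  set B0 : Set Ω := {ω | Y0 ω = 0} ∩ B with hB0
  have hmB : MeasurableSet B := ((hDm (measurableSet_singleton 1)).inter hXx)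
  have hmB1 : MeasurableSet B1 := (hY0m (measurableSet_singleton 1)).inter hmB
  have hmB0 : MeasurableSet B0 := (hY0m (measurableSet_singleton 0)).inter hmB
  have hmT : MeasurableSet {ω | T ω = 1} := hTm (measurableSet_singleton 1)
  have hdisj : Disjoint B1 B0 := by
    rw [Set.disjoint_left]
    rintro ω ⟨h1, -⟩ ⟨h0, -⟩
    simp only [Set.mem_setOf_eq] at h1 h0
    omega
  have hunion : B1 ∪ B0 = B := by
    ext ω
    simp only [hB1, hB0, Set.mem_union, Set.mem_inter_iff, Set.mem_setOf_eq]
    rcases hY0bin ω with h | h <;> simp [h] <;> tauto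
  -- real quantities
  set a1 := (μ ({ω | T ω = 1} ∩ B1)).toReal with ha1
  set a0 := (μ ({ω | T ω = 1} ∩ B0)).toReal with ha0
  set b1 := (μ B1).toReal with hb1def
  set b0 := (μ B0).toReal with hb0def
  set b := (μ B).toReal with hbdef
  have hb1pos : 0 < b1 := ENNReal.toReal_pos hpos1.ne' (measure_ne_top μ _)
  have hb0pos : 0 < b0 := ENNReal.toReal_pos hpos0.ne' (measure_ne_top μ _)
  have hbpos : 0 < b := ENNReal.toReal_pos hpos.ne' (measure_ne_top μ _)
  have ha1nn : 0 ≤ a1 := ENNReal.toReal_nonneg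
  have ha0nn : 0 ≤ a0 := ENNReal.toReal_nonneg
  have hγpos : 0 < γ := lt_of_lt_of_le one_pos hγ
  have hbsum : b = b1 + b0 := by
    rw [hbdef, hb1def, hb0def, ← ENNReal.toReal_add (measure_ne_top μ _) (measure_ne_top μ _),
      ← measure_union hdisj hmB0, hunion]
  have hasum : (μ ({ω | T ω = 1} ∩ B)).toReal = a1 + a0 := by
    rw [ha1, ha0, ← ENNReal.toReal_add (measure_ne_top μ _) (measure_ne_top μ _),
      ← measure_union (hdisj.mono Set.inter_subset_right Set.inter_subset_right)
        (hmT.inter hmB0), ← Set.inter_union_distrib_left, hunion]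
  have hY0B : {ω | Y0 ω = 1} ∩ B = B1 := rfl
  have hsensL' : (1 / γ) * (a1 / b1) ≤ a0 / b0 := hsensL
  have key : a1 * b0 ≤ γ * (a0 * b1) := by
    rw [div_mul_div_comm, div_le_div_iff₀ (by positivity) hb0pos] at hsensL'
    nlinarith [hsensL']
  -- rewrite goal
  show a1 / b1 ≤ (μ ({ω | T ω = 1} ∩ B)).toReal / b /
      (b1 / b + 1 / γ * (1 - b1 / b))
  rw [hasum]
  have h1q : 1 - b1 / b = b0 / b := by
    field_simp
    linarith [hbsum]
  rw [h1q]
  have hd : 0 < b1 / b + 1 / γ * (b0 / b) := by positivity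
  rw [le_div_iff₀ hd]
  have hγ0 : γ ≠ 0 := ne_of_gt hγpos
  rw [div_mul_eq_mul_div, div_le_div_iff₀ hb1pos hbpos]
  field_simp
  nlinarith [mul_le_mul_of_nonneg_right key (mul_self_nonneg b), ha1nn, ha0nn, hb1pos, hb0pos, hbpos, hγpos]
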